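/- Let α be a peak composition of n, let S ∈ SMPCT(α), and let β be a composition of n that refines comp_n(Des(S)). Then there exists a unique T ∈ MPCT(α) with wt(T) = β such that Std(T) = S. -/

import Mathlib

open scoped Classical

noncomputable section

namespace QSQ

/-- A box `(c, r)`: column `c`, row `r` (both 1-indexed, rows counted from the bottom). -/
abbrev Box : Type := ℕ × ℕ

/-- An entry of the marked alphabet: `(i, true)` represents `i′`, `(i, false)` represents `i`. -/
abbrev MEntry : Type := ℕ × Bool

/-- Code realising the marked-alphabet order `1′ < 1 < 2′ < 2 < ⋯`. -/
def mcode (x : MEntry) : ℕ := 2 * x.1 - (if x.2 then 1 else 0)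

/-- `α` is a composition of `n`: a list of positive integers summing to `n`. -/
def IsComposition (n : ℕ) (α : List ℕ) : Prop := (∀ a ∈ α, 0 < a) ∧ α.sum = n

/-- All parts are positive, and every part except possibly the last is `> 1`. -/
def PeakShape (α : List ℕ) : Prop :=
  (∀ a ∈ α, 0 < a) ∧ ∀ i, i + 1 < α.length → 1 < α.getD i 0

/-- `α` is a peak composition of `n`. -/
def IsPeakComposition (n : ℕ) (α : List ℕ) : Prop := IsComposition n α ∧ PeakShape α

/-- Box `(c, r)` belongs to the diagram `D_α`. -/
def inDiagram (α : List ℕ) (b : Box) : Prop :=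
  1 ≤ b.1 ∧ 1 ≤ b.2 ∧ b.2 ≤ α.length ∧ b.1 ≤ α.getD (b.2 - 1) 0

instance (α : List ℕ) (b : Box) : Decidable (inDiagram α b) := by
  unfold inDiagram; infer_instance

/-- The diagram `D_α` as a finite set of boxes. -/
def diagramFinset (α : List ℕ) : Finset Box :=
  ((Finset.Icc 1 (α.foldr max 0)) ×ˢ (Finset.Icc 1 α.length)).filter (fun b => inDiagram α b)

/-- `B` is the set of boxes of the diagram of some peak composition. -/
def IsPeakDiagram (B : Set Box) : Prop :=
  ∃ γ : List ℕ, PeakShape γ ∧ B = {b | inDiagram γ b}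

/-- `β` refines `α`: `α` is obtained by summing consecutive entries of `β`. -/
def Refines (β α : List ℕ) : Prop :=
  ∃ L : List (List ℕ), (∀ l ∈ L, l ≠ []) ∧ L.flatten = β ∧ L.map List.sum = α

/-- `set(γ) = {γ₁, γ₁+γ₂, …, γ₁+⋯+γ_{k-1}}`, the proper partial sums. -/
def setOfComp (γ : List ℕ) : Finset ℕ :=
  ((List.range (γ.length - 1)).map (fun i => (γ.take (i + 1)).sum)).toFinset

/-- `comp_n(X)`: the composition of `n` whose set of proper partial sums is `X ⊆ [n-1]`. -/
def compOf (n : ℕ) (X : Finset ℕ) : List ℕ :=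
  let l := (0 :: X.sort (· ≤ ·)) ++ [n]
  (List.range (l.length - 1)).map (fun i => l.getD (i + 1) 0 - l.getD i 0)

/-- `Peak(X) = {i ∈ X : i − 1 ∉ X and i ≠ 1}`. -/
def peakSet (X : Finset ℕ) : Finset ℕ := X.filter (fun i => (i - 1) ∉ X ∧ i ≠ 1)

/-! ### Marked peak composition tableaux -/

/-- `T` is a marked peak composition tableau of shape `α` (a peak composition of `n`).
Fillings take the default value `(0, false)` outside the diagram. -/
structure IsMPCT (n : ℕ) (α : List ℕ) (T : Box → MEntry) : Prop where
  offDiag : ∀ b, ¬ inDiagram α b → T b = (0, false)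
  pos : ∀ b, inDiagram α b → 1 ≤ (T b).1
  /-- (MPCT1) rows weakly increase, with no repeated marked entry in a row. -/
  row_weak : ∀ c c' r, c < c' → inDiagram α (c, r) → inDiagram α (c', r) →
      mcode (T (c, r)) ≤ mcode (T (c', r)) ∧ ((T (c, r)).2 = true → T (c, r) ≠ T (c', r))
  /-- (MPCT2) the first column strictly increases bottom to top. -/
  col_strict : ∀ r r', r < r' → inDiagram α (1, r) → inDiagram α (1, r') →
      mcode (T (1, r)) < mcode (T (1, r'))
  /-- (MPCT3) the boxes with entries among `{1', 1, …, k', k}` form a peak-composition diagram. -/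
  peak_filter : ∀ k ≤ n, IsPeakDiagram {b | inDiagram α b ∧ (T b).1 ≤ k}
  /-- (MPCT4) an unmarked `i` in box `(2,r)` forbids `i` and `i'` in box `(1,r+1)`. -/
  mpct4 : ∀ r, inDiagram α (2, r) → inDiagram α (1, r + 1) → (T (2, r)).2 = false →
      (T (1, r + 1)).1 ≠ (T (2, r)).1

/-- The number of occurrences of `i` or `i'` in `T`. -/
def wtFun (α : List ℕ) (T : Box → MEntry) (i : ℕ) : ℕ :=
  ((diagramFinset α).filter (fun b => (T b).1 = i)).card

/-- The weight of `T` as a list `(wt(T)₁, …, wt(T)_m)`, `m` the largest value occurring. -/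
def wtList (α : List ℕ) (T : Box → MEntry) : List ℕ :=
  (List.range ((diagramFinset α).sup (fun b => (T b).1))).map (fun i => wtFun α T (i + 1))

/-- `T ∈ MPCT(α)`: an MPCT whose weight has no zero entry to the left of a nonzero entry. -/
def InMPCT (n : ℕ) (α : List ℕ) (T : Box → MEntry) : Prop :=
  IsMPCT n α T ∧ ∀ i j, 1 ≤ i → i < j → wtFun α T i = 0 → wtFun α T j = 0

/-- `T ∈ SMPCT(α)`: each number `1, …, n` appears exactly once (marked or unmarked). -/
def InSMPCT (n : ℕ) (α : List ℕ) (T : Box → MEntry) : Prop :=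
  InMPCT n α T ∧ ∀ i, 1 ≤ i → i ≤ n → wtFun α T i = 1

/-! ### Standardisation -/

/-- Secondary key for the standardisation order: marked entries of a given value are taken
bottom to top; unmarked ones from the highest row downwards. -/
def stdk2 (α : List ℕ) (T : Box → MEntry) (b : Box) : ℕ :=
  if (T b).2 then b.2 else α.length + 1 - b.2

/-- The strict total order on boxes in which standardisation assigns `1, 2, …, n`. -/
def keyLt (α : List ℕ) (T : Box → MEntry) (a b : Box) : Prop :=
  mcode (T a) < mcode (T b) ∨
    (mcode (T a) = mcode (T b) ∧ (stdk2 α T a < stdk2 α T b ∨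
      (stdk2 α T a = stdk2 α T b ∧ a.1 < b.1)))

/-- The standardisation map: box `b` receives the rank of `b` in the standardisation order,
keeping its mark. -/
def stdize (α : List ℕ) (T : Box → MEntry) : Box → MEntry := fun b =>
  if inDiagram α b then
    (((diagramFinset α).filter (fun a => keyLt α T a b)).card + 1, (T b).2)
  else (0, false)

/-- The descent set of `S ∈ SMPCT(α)`: `i` is a descent if `i` is unmarked and strictly below
`i+1`, or `i+1` is marked and weakly below `i`. -/
def DesM (n : ℕ) (α : List ℕ) (S : Box → MEntry) : Finset ℕ :=
  (Finset.Icc 1 (n - 1)).filter (fun i =>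
    ∃ b ∈ diagramFinset α, ∃ b' ∈ diagramFinset α, (S b).1 = i ∧ (S b').1 = i + 1 ∧
      (((S b).2 = false ∧ b.2 < b'.2) ∨ ((S b').2 = true ∧ b'.2 ≤ b.2)))

/-- Remove all marks. -/
def unmark (S : Box → MEntry) : Box → ℕ := fun b => (S b).1

/-! ### Standard (unmarked) tableaux -/

/-- `T` is a standard immaculate tableau of shape `α ⊨ n`: a bijective filling by `1, …, n`
with rows increasing left to right and the first column increasing bottom to top. -/
structure IsSIT (n : ℕ) (α : List ℕ) (T : Box → ℕ) : Prop where
  offDiag : ∀ b, ¬ inDiagram α b → T b = 0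
  range : ∀ b, inDiagram α b → 1 ≤ T b ∧ T b ≤ n
  inj : ∀ b b', inDiagram α b → inDiagram α b' → T b = T b' → b = b'
  surj : ∀ i, 1 ≤ i → i ≤ n → ∃ b, inDiagram α b ∧ T b = i
  row_strict : ∀ c c' r, c < c' → inDiagram α (c, r) → inDiagram α (c', r) →
      T (c, r) < T (c', r)
  col_strict : ∀ r r', r < r' → inDiagram α (1, r) → inDiagram α (1, r') →
      T (1, r) < T (1, r')

/-- (SPCT3)/(SPYCT3): for every `k ≤ n` the boxes with entries `≤ k` form the diagram of a
peak composition. -/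
def SPCT3 (n : ℕ) (α : List ℕ) (T : Box → ℕ) : Prop :=
  ∀ k ≤ n, IsPeakDiagram {b | inDiagram α b ∧ T b ≤ k}

/-- Standard peak composition tableau. -/
def IsSPCT (n : ℕ) (α : List ℕ) (T : Box → ℕ) : Prop := IsSIT n α T ∧ SPCT3 n α T

/-- (SPYCT4): if `T(c,r) < T(c+1,r')` for some `r' < r` then box `(c+1,r)` exists and
`T(c+1,r) < T(c+1,r')`. -/
def SPYCT4 (α : List ℕ) (T : Box → ℕ) : Prop :=
  ∀ c r r', r' < r → inDiagram α (c, r) → inDiagram α (c + 1, r') →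
    T (c, r) < T (c + 1, r') → inDiagram α (c + 1, r) ∧ T (c + 1, r) < T (c + 1, r')

/-- Standard Young composition tableau. -/
def IsSYCT (n : ℕ) (α : List ℕ) (T : Box → ℕ) : Prop := IsSIT n α T ∧ SPYCT4 α T

/-- Standard peak Young composition tableau (of peak shape `α ⊨ n`). -/
def IsSPYCT (n : ℕ) (α : List ℕ) (T : Box → ℕ) : Prop :=
  IsPeakComposition n α ∧ IsSIT n α T ∧ SPCT3 n α T ∧ SPYCT4 α T

/-- `Des↑(T) = {i : i+1 is strictly above i}`. -/
def DesUp (n : ℕ) (α : List ℕ) (T : Box → ℕ) : Finset ℕ :=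
  (Finset.Icc 1 (n - 1)).filter (fun i =>
    ∃ b ∈ diagramFinset α, ∃ b' ∈ diagramFinset α, T b = i ∧ T b' = i + 1 ∧ b.2 < b'.2)

def PeakUp (n : ℕ) (α : List ℕ) (T : Box → ℕ) : Finset ℕ := peakSet (DesUp n α T)

/-- `Des←(T) = {i : i+1 is weakly left of i}`. -/
def DesLeft (n : ℕ) (α : List ℕ) (T : Box → ℕ) : Finset ℕ :=
  (Finset.Icc 1 (n - 1)).filter (fun i =>
    ∃ b ∈ diagramFinset α, ∃ b' ∈ diagramFinset α, T b = i ∧ T b' = i + 1 ∧ b'.1 ≤ b.1)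

def PeakLeft (n : ℕ) (α : List ℕ) (T : Box → ℕ) : Finset ℕ := peakSet (DesLeft n α T)

/-! ### Dual immaculate recording tableaux -/

/-- `i+1` lies strictly right of `i` in `Q` (so `i+1` continues the row strip of `i`). -/
def ContR (β : List ℕ) (Q : Box → ℕ) (i : ℕ) : Prop :=
  ∃ b ∈ diagramFinset β, ∃ b' ∈ diagramFinset β, Q b = i ∧ Q b' = i + 1 ∧ b.1 < b'.1

/-- `Q` is a dual immaculate recording tableau of shape `β ⊨ n`. -/
structure IsDIRT (n : ℕ) (β : List ℕ) (Q : Box → ℕ) : Prop where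
  offDiag : ∀ b, ¬ inDiagram β b → Q b = 0
  range : ∀ b, inDiagram β b → 1 ≤ Q b ∧ Q b ≤ n
  inj : ∀ b b', inDiagram β b → inDiagram β b' → Q b = Q b' → b = b'
  surj : ∀ i, 1 ≤ i → i ≤ n → ∃ b, inDiagram β b ∧ Q b = i
  /-- (DIRT1) -/
  row_strict : ∀ c c' r, c < c' → inDiagram β (c, r) → inDiagram β (c', r) →
      Q (c, r) < Q (c', r)
  /-- (DIRT3) first-column entries increase from top to bottom. -/
  col_top_down : ∀ r r', r < r' → inDiagram β (1, r) → inDiagram β (1, r') →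
      Q (1, r') < Q (1, r)
  /-- (DIRT2) row strips start in the first column. -/
  strips_start : ∀ i b, 1 ≤ i → i ≤ n → inDiagram β b → Q b = i →
      (i = 1 ∨ ¬ ContR β Q (i - 1)) → b.1 = 1
  /-- (DIRT4) -/
  dirt4 : ∀ c r r', r' < r → inDiagram β (c, r) → inDiagram β (c, r') →
      Q (c, r') < Q (c, r) → inDiagram β (c + 1, r') ∧ Q (c + 1, r') < Q (c, r)

/-- `Q` has row strip shape `γ`: the breaks between row strips occur exactly at the proper
partial sums of `γ`. -/
def HasRowStripShape (n : ℕ) (β : List ℕ) (Q : Box → ℕ) (γ : List ℕ) : Prop :=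
  IsComposition n γ ∧ ∀ i, 1 ≤ i → i + 1 ≤ n → (ContR β Q i ↔ i ∉ setOfComp γ)

/-! ### Quasisymmetric functions -/

/-- The monomial quasisymmetric function `M_α` in variables indexed by `ℕ`. -/
def Mqs (α : List ℕ) : MvPowerSeries ℕ ℚ := fun d =>
  if ∃ f : Fin α.length → ℕ, StrictMono f ∧
      d = ∑ j : Fin α.length, Finsupp.single (f j) (α.get j) then 1 else 0

/-- The fundamental quasisymmetric function `F_α = Σ_{β refines α} M_β`. -/
def Fqs (α : List ℕ) : MvPowerSeries ℕ ℚ :=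
  ∑ᶠ β ∈ {β : List ℕ | Refines β α}, Mqs β

/-- The peak function `K_α` for a peak composition `α ⊨ n`. -/
def Kfn (n : ℕ) (α : List ℕ) : MvPowerSeries ℕ ℚ :=
  (MvPowerSeries.C : ℚ →+* MvPowerSeries ℕ ℚ) ((2 : ℚ) ^ ((peakSet (setOfComp α)).card + 1)) *
    ∑ᶠ β ∈ {β : List ℕ | IsComposition n β ∧
      peakSet (setOfComp α) ⊆ symmDiff (setOfComp β) ((setOfComp β).image (· + 1))}, Fqs β

/-- The quasisymmetric Schur Q-function `Q̃_α = Σ_{T ∈ MPCT(α)} M_{wt(T)}`. -/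
def Qtilde (n : ℕ) (α : List ℕ) : MvPowerSeries ℕ ℚ :=
  ∑ᶠ T ∈ {T : Box → MEntry | InMPCT n α T}, Mqs (wtList α T)

/-- The peak Young quasisymmetric Schur function
`S̃_α = Σ_{T ∈ SPYCT(α)} K_{comp_n(Peak←(T))}`. -/
def Stilde (n : ℕ) (α : List ℕ) : MvPowerSeries ℕ ℚ :=
  ∑ᶠ T ∈ {T : Box → ℕ | IsSPYCT n α T}, Kfn n (compOf n (PeakLeft n α T))

/-! ### The insertion algorithm of Allen–Hallam–Mason -/

/-- A tableau given concretely as its list of rows, from bottom to top. -/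
def shapeOf (rows : List (List ℕ)) : List ℕ := rows.map List.length

/-- The filling `Box → ℕ` determined by a list of rows (bottom to top). -/
def toFilling (rows : List (List ℕ)) : Box → ℕ := fun b =>
  if 1 ≤ b.1 ∧ 1 ≤ b.2 then (rows.getD (b.2 - 1) []).getD (b.1 - 1) 0 else 0

/-- The augmented-diagram scan order: columns right to left, each column top to bottom.
(Positions not present in a given row are simply skipped by the insertion step.) -/
def scanList (rows : List (List ℕ)) : List (ℕ × ℕ) :=
  let C := (rows.map List.length).foldr max 0 + 1
  ((List.range C).reverse.map (fun ci =>
    (List.range rows.length).reverse.map (fun ri => (ci + 1, ri + 1)))).flatten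

/-- One insertion of `k` (Procedure 3.1 of Allen–Hallam–Mason): walk the scan list looking for
the first box `(c,r)` with `T̄(c-1,r) ≤ k < T̄(c,r)`; place at an augmented box, bump at an
interior box and continue with the bumped entry, or create a new row (in the highest position
in the first column with all first-column entries below smaller than `k`) if the scan ends.
Returns the new rows and the position of the newly created box. -/
def insertScan : List (ℕ × ℕ) → ℕ → List (List ℕ) → List (List ℕ) × ℕ × ℕ
  | [], k, rows =>
      let j := (rows.takeWhile (fun row => row.headD 0 < k)).length
      (rows.take j ++ [[k]] ++ rows.drop j, (1, j + 1))
  | (c, r) :: rest, k, rows =>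
      let row := rows.getD (r - 1) []
      if 2 ≤ c ∧ c ≤ row.length + 1 ∧ row.getD (c - 2) 0 ≤ k then
        if c = row.length + 1 then
          (rows.set (r - 1) (row ++ [k]), (c, r))
        else if k < row.getD (c - 1) 0 then
          insertScan rest (row.getD (c - 1) 0) (rows.set (r - 1) (row.set (c - 1) k))
        else insertScan rest k rows
      else insertScan rest k rows

/-- The reading word of a filling of shape `α`: rows read top to bottom, left to right. -/
def readingWord (α : List ℕ) (T : Box → ℕ) : List ℕ :=
  ((List.range α.length).reverse.map (fun ri =>
    (List.range (α.getD ri 0)).map (fun ci => T (ci + 1, ri + 1)))).flatten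

/-- Reading insertion: insert the letters of `w` successively into the (initially empty)
insertion tableau `P`, recording in `Q` the label of each newly created box. -/
def readingInsertPQ (w : List ℕ) : List (List ℕ) × List (List ℕ) :=
  w.foldl (fun PQ k =>
    let res := insertScan (scanList PQ.1) k PQ.1
    let c := res.2.1
    let r := res.2.2
    let j := (PQ.2.map List.length).sum + 1
    if c = 1 then
      (res.1, PQ.2.take (r - 1) ++ [[j]] ++ PQ.2.drop (r - 1))
    else
      (res.1, PQ.2.set (r - 1) ((PQ.2.getD (r - 1) []) ++ [j]))) ([], [])

/-! ### Procedure 5.2: generating DIRTs -/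

/-- `PlaceSeq rows v lc cnt out`: starting from `rows`, place the `cnt` entries
`v, v+1, …, v+cnt-1` one at a time, each at the end of some row strictly to the right of the
previously placed entry (whose column was `lc`), never placing at the end of a row of length
`j` when some lower row has length `j + 1`; `out` is the result. -/
inductive PlaceSeq : List (List ℕ) → ℕ → ℕ → ℕ → List (List ℕ) → Prop
  | refl (rows : List (List ℕ)) (v lc : ℕ) : PlaceSeq rows v lc 0 rows
  | step (rows : List (List ℕ)) (v lc cnt : ℕ) (r : ℕ) (out : List (List ℕ))
      (hr : r < rows.length)
      (hright : lc < (rows.getD r []).length + 1)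
      (hrule3 : ∀ r' < r, (rows.getD r' []).length ≠ (rows.getD r []).length + 1)
      (next : PlaceSeq (rows.set r ((rows.getD r []) ++ [v])) (v + 1)
        ((rows.getD r []).length + 1) cnt out) :
      PlaceSeq rows v lc (cnt + 1) out


/-! ### Auxiliary lemmas -/

lemma getD_le_foldr_max (l : List ℕ) (i : ℕ) : l.getD i 0 ≤ l.foldr max 0 := by
  induction l generalizing i with
  | nil => simp
  | cons a t ih =>
    cases i with
    | zero => simp [List.foldr]
    | succ j =>
      simp only [List.getD_cons_succ, List.foldr]
      exact le_trans (ih j) (le_max_right _ _)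

lemma mem_diagramFinset {α : List ℕ} {b : Box} : b ∈ diagramFinset α ↔ inDiagram α b := by
  unfold diagramFinset
  simp only [Finset.mem_filter, Finset.mem_product, Finset.mem_Icc]
  constructor
  · exact fun h => h.2
  · intro h
    refine ⟨⟨⟨h.1, ?_⟩, h.2.1, h.2.2.1⟩, h⟩
    exact le_trans h.2.2.2 (getD_le_foldr_max _ _)

lemma sum_getD_range (l : List ℕ) : ∑ i ∈ Finset.range l.length, l.getD i 0 = l.sum := by
  induction l with
  | nil => simp
  | cons a t ih =>
    rw [List.length_cons, Finset.sum_range_succ']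
    simp only [List.getD_cons_succ, List.getD_cons_zero, List.sum_cons]
    rw [ih]; omega

lemma diagram_eq_biUnion (α : List ℕ) :
    diagramFinset α = (Finset.Icc 1 α.length).biUnion
      (fun r => (Finset.Icc 1 (α.getD (r-1) 0)).image (fun c => ((c, r) : Box))) := by
  ext b
  obtain ⟨c, r⟩ := b
  simp only [mem_diagramFinset, Finset.mem_biUnion, Finset.mem_Icc, Finset.mem_image,
    inDiagram, Prod.mk.injEq]
  constructor
  · rintro ⟨h1, h2, h3, h4⟩
    exact ⟨r, ⟨h2, h3⟩, c, ⟨h1, h4⟩, rfl, rfl⟩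
  · rintro ⟨r', ⟨h2, h3⟩, c', ⟨h1, h4⟩, rfl, rfl⟩
    exact ⟨h1, h2, h3, h4⟩

lemma card_diagramFinset (α : List ℕ) : (diagramFinset α).card = α.sum := by
  rw [diagram_eq_biUnion, Finset.card_biUnion]
  · have h1 : ∀ r ∈ Finset.Icc 1 α.length,
        ((Finset.Icc 1 (α.getD (r-1) 0)).image (fun c => ((c, r) : Box))).card
          = α.getD (r-1) 0 := by
      intro r _
      rw [Finset.card_image_of_injective _ (fun a b h => congrArg Prod.fst h), Nat.card_Icc]
      omega
    rw [Finset.sum_congr rfl h1]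
    rw [show ∑ x ∈ Finset.Icc 1 α.length, α.getD (x - 1) 0
        = ∑ i ∈ Finset.range α.length, α.getD i 0 from
      Finset.sum_nbij' (fun x => x - 1) (fun i => i + 1)
        (by intro a ha; rw [Finset.mem_Icc] at ha; rw [Finset.mem_range]; omega)
        (by intro a ha; rw [Finset.mem_range] at ha; rw [Finset.mem_Icc]; omega)
        (by intro a ha; rw [Finset.mem_Icc] at ha; omega)
        (by intro a _; omega)
        (by intro a _; rfl)]
    exact sum_getD_range α
  · intro x _ y _ hxy
    simp only [Finset.disjoint_left, Finset.mem_image]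
    rintro a ⟨c, _, rfl⟩ ⟨c', _, h⟩
    exact hxy (congrArg Prod.snd h).symm

/-! ### Partial sums and block function -/

def psum (β : List ℕ) (v : ℕ) : ℕ := (β.take v).sum

def blk (β : List ℕ) (i : ℕ) : ℕ :=
  ((Finset.range β.length).filter (fun j => psum β (j+1) < i)).card + 1

lemma ps_succ (β : List ℕ) {v : ℕ} (h : v < β.length) :
    psum β (v+1) = psum β v + β.getD v 0 := by
  unfold psum
  rw [List.sum_take_succ _ _ h, List.getD_eq_getElem _ _ h]

lemma ps_mono (β : List ℕ) {u v : ℕ} (h : u ≤ v) : psum β u ≤ psum β v := by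
  unfold psum
  conv_rhs => rw [← List.take_append_drop u (β.take v)]
  rw [List.sum_append, List.take_take, min_eq_left h]
  exact Nat.le_add_right _ _

lemma ps_le_sum (β : List ℕ) (v : ℕ) : psum β v ≤ β.sum := by
  conv_rhs => rw [← List.take_append_drop v β]
  rw [List.sum_append]
  exact Nat.le_add_right _ _

lemma ps_len (β : List ℕ) : psum β β.length = β.sum := by
  unfold psum; rw [List.take_length]

lemma ps_of_ge (β : List ℕ) {v : ℕ} (h : β.length ≤ v) : psum β v = β.sum := by
  unfold psum; rw [List.take_of_length_le h]

lemma ps_lt (β : List ℕ) (hpos : ∀ a ∈ β, 0 < a) {v : ℕ} (h : v < β.length) :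
    psum β v < psum β (v+1) := by
  rw [ps_succ β h]
  have h1 : 0 < β.getD v 0 := by
    rw [List.getD_eq_getElem _ _ h]
    exact hpos _ (List.getElem_mem _)
  omega

lemma ps_strict (β : List ℕ) (hpos : ∀ a ∈ β, 0 < a) {u v : ℕ} (hu : u < v)
    (hv : v ≤ β.length) : psum β u < psum β v :=
  lt_of_lt_of_le (ps_lt β hpos (by omega)) (ps_mono β (by omega))

lemma blk_pos (β : List ℕ) (i : ℕ) : 1 ≤ blk β i := by unfold blk; omega

lemma blk_le_iff (β : List ℕ) (hpos : ∀ a ∈ β, 0 < a) {i v : ℕ} (hi : 1 ≤ i)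
    (hin : i ≤ β.sum) : blk β i ≤ v ↔ i ≤ psum β v := by
  rcases Nat.eq_zero_or_pos v with rfl | hv
  · have h1 := blk_pos β i
    have h2 : psum β 0 = 0 := rfl
    constructor <;> intro h <;> omega
  constructor
  · intro h
    by_contra hlt
    push_neg at hlt
    have hvlen : v < β.length := by
      by_contra h'
      push_neg at h'
      rw [ps_of_ge β h'] at hlt
      omega
    have hsub : Finset.range v ⊆
        (Finset.range β.length).filter (fun j => psum β (j+1) < i) := by
      intro j hj
      rw [Finset.mem_range] at hj
      refine Finset.mem_filter.mpr ⟨Finset.mem_range.mpr (by omega), ?_⟩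
      exact lt_of_le_of_lt (ps_mono β (by omega : j + 1 ≤ v)) hlt
    have := Finset.card_le_card hsub
    rw [Finset.card_range] at this
    unfold blk at h
    omega
  · intro h
    have hsub : (Finset.range β.length).filter (fun j => psum β (j+1) < i)
        ⊆ Finset.range (v - 1) := by
      intro j hj
      obtain ⟨hj1, hj2⟩ := Finset.mem_filter.mp hj
      rw [Finset.mem_range] at hj1 ⊢
      by_contra hc
      push_neg at hc
      have : psum β v ≤ psum β (j+1) := ps_mono β (by omega)
      omega
    have := Finset.card_le_card hsub
    rw [Finset.card_range] at this
    unfold blk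
    omega

lemma blk_eq_iff (β : List ℕ) (hpos : ∀ a ∈ β, 0 < a) {i v : ℕ} (hi : 1 ≤ i)
    (hin : i ≤ β.sum) (hv : 1 ≤ v) :
    blk β i = v ↔ psum β (v-1) < i ∧ i ≤ psum β v := by
  have h1 := blk_le_iff β hpos hi hin (v := v)
  have h2 := blk_le_iff β hpos hi hin (v := v - 1)
  omega

lemma blk_mono (β : List ℕ) (hpos : ∀ a ∈ β, 0 < a) {i i' : ℕ} (hi : 1 ≤ i)
    (hii : i ≤ i') (hin : i' ≤ β.sum) : blk β i ≤ blk β i' := by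
  have h1 : i' ≤ psum β (blk β i') :=
    (blk_le_iff β hpos (by omega) hin).mp (le_refl _)
  exact (blk_le_iff β hpos hi (by omega)).mpr (by omega)

lemma mem_setOfComp {γ : List ℕ} {i : ℕ} :
    i ∈ setOfComp γ ↔ ∃ k, k < γ.length - 1 ∧ (γ.take (k+1)).sum = i := by
  unfold setOfComp
  rw [List.mem_toFinset, List.mem_map]
  constructor
  · rintro ⟨k, hk, rfl⟩
    exact ⟨k, List.mem_range.mp hk, rfl⟩
  · rintro ⟨k, hk, rfl⟩
    exact ⟨k, List.mem_range.mpr hk, rfl⟩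

lemma blk_lt_of_break (β : List ℕ) (hpos : ∀ a ∈ β, 0 < a) {i : ℕ}
    (h : i ∈ setOfComp β) : 1 ≤ i ∧ i + 1 ≤ β.sum ∧ blk β i < blk β (i+1) := by
  obtain ⟨k, hk, hks⟩ := mem_setOfComp.mp h
  have hps : psum β (k+1) = i := hks
  have hi1 : 1 ≤ i := by
    have : psum β 0 < psum β (k+1) := ps_strict β hpos (by omega) (by omega)
    have h0 : psum β 0 = 0 := rfl
    omega
  have hisum : i + 1 ≤ β.sum := by
    have : psum β (k+1) < psum β β.length := ps_strict β hpos (by omega) (le_refl _)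
    rw [ps_len] at this
    omega
  refine ⟨hi1, hisum, ?_⟩
  have h1 : blk β i ≤ k + 1 :=
    (blk_le_iff β hpos hi1 (by omega)).mpr (by omega)
  have h2 : ¬ blk β (i+1) ≤ k + 1 := by
    rw [blk_le_iff β hpos (by omega) hisum]
    omega
  omega
lemma refines_setOfComp {β γ : List ℕ} (h : Refines β γ) :
    setOfComp γ ⊆ setOfComp β := by
  obtain ⟨L, hne, hflat, hsum⟩ := h
  intro i hi
  rw [mem_setOfComp] at hi ⊢
  obtain ⟨k, hk, hks⟩ := hi
  have hLlen : L.length = γ.length := by rw [← hsum, List.length_map]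
  have hk2 : k + 2 ≤ L.length := by omega
  set m := ((L.take (k+1)).flatten).length with hm
  have hmle : (L.take (k+1)).flatten ++ (L.drop (k+1)).flatten = β := by
    rw [← List.flatten_append, List.take_append_drop, hflat]
  have htake : β.take m = (L.take (k+1)).flatten := by
    rw [← hmle]; exact List.take_left
  have e1 : ((L.take (k+1)).map List.sum) = γ.take (k+1) := by
    rw [← hsum, List.map_take]
  have hsum2 : (β.take m).sum = i := by
    rw [htake, List.sum_flatten, e1, hks]
  have h0 : 0 < (L.take (k+1)).length := by
    rw [List.length_take]; omega
  obtain ⟨l₀, hl₀⟩ := List.exists_mem_of_length_pos h0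
  have hflne : (L.take (k+1)).flatten ≠ [] := by
    intro hh
    exact hne l₀ (List.mem_of_mem_take hl₀) (List.flatten_eq_nil_iff.mp hh l₀ hl₀)
  have hm1 : 1 ≤ m := List.length_pos_iff.mpr hflne
  have h0' : 0 < (L.drop (k+1)).length := by
    rw [List.length_drop]; omega
  obtain ⟨l₁, hl₁⟩ := List.exists_mem_of_length_pos h0'
  have hflne' : (L.drop (k+1)).flatten ≠ [] := by
    intro hh
    exact hne l₁ (List.mem_of_mem_drop hl₁) (List.flatten_eq_nil_iff.mp hh l₁ hl₁)
  have hm2 : m < β.length := by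
    have := congrArg List.length hmle
    rw [List.length_append] at this
    have := List.length_pos_iff.mpr hflne'
    omega
  refine ⟨m - 1, by omega, ?_⟩
  have : m - 1 + 1 = m := by omega
  rw [this, hsum2]

lemma mem_setOfComp_compOf {n : ℕ} {X : Finset ℕ} (hX : ∀ x ∈ X, 1 ≤ x ∧ x ≤ n - 1)
    {x : ℕ} (hx : x ∈ X) : x ∈ setOfComp (compOf n X) := by
  classical
  set s := X.sort (· ≤ ·) with hs
  set l := (0 :: s) ++ [n] with hl
  have hllen : l.length = s.length + 2 := by rw [hl]; simp
  have hc : compOf n X = (List.range (s.length + 1)).map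
      (fun i => l.getD (i + 1) 0 - l.getD i 0) := by
    unfold compOf
    rw [← hs, ← hl]
    show List.map (fun i => l.getD (i + 1) 0 - l.getD i 0) (List.range (l.length - 1))
        = List.map (fun i => l.getD (i + 1) 0 - l.getD i 0) (List.range (s.length + 1))
    rw [hllen]
    congr 1
  have hlen : (compOf n X).length = s.length + 1 := by
    rw [hc, List.length_map, List.length_range]
  have hd : ∀ i, i < s.length + 1 → (compOf n X).getD i 0
      = l.getD (i+1) 0 - l.getD i 0 := by
    intro i hi
    rw [hc, List.getD_eq_getElem _ _ (by simpa using hi)]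
    simp
  have hl0 : l.getD 0 0 = 0 := rfl
  have hls : ∀ i, i < s.length → l.getD (i+1) 0 = s.getD i 0 := by
    intro i hi
    rw [hl, List.cons_append, List.getD_cons_succ]
    rw [List.getD_eq_getElem _ _ (by simp; omega), List.getD_eq_getElem _ _ hi]
    rw [List.getElem_append_left hi]
  have hln : l.getD (s.length + 1) 0 = n := by
    rw [hl, List.cons_append, List.getD_cons_succ]
    rw [List.getD_eq_getElem _ _ (by simp)]
    exact List.getElem_concat_length (l := s) (a := n) rfl _
  have hsorted : List.Pairwise (· ≤ ·) s := X.pairwise_sort (· ≤ ·)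
  have hmem : ∀ i, i < s.length → 1 ≤ s.getD i 0 ∧ s.getD i 0 ≤ n - 1 := by
    intro i hi
    have hmem' : s.getD i 0 ∈ X := by
      rw [← Finset.mem_sort (α := ℕ) (· ≤ ·)]
      rw [List.getD_eq_getElem _ _ hi]
      exact List.getElem_mem _
    exact hX _ hmem'
  have hmono : ∀ i j, i ≤ j → j < s.length → s.getD i 0 ≤ s.getD j 0 := by
    intro i j hij hj
    rcases eq_or_lt_of_le hij with rfl | hlt
    · exact le_refl _
    · rw [List.getD_eq_getElem _ _ (by omega), List.getD_eq_getElem _ _ hj]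
      exact List.pairwise_iff_getElem.mp hsorted i j (by omega) hj hlt
  have hstep : ∀ i, i ≤ s.length → l.getD i 0 ≤ l.getD (i+1) 0 := by
    intro i hi
    cases i with
    | zero => rw [hl0]; exact Nat.zero_le _
    | succ j =>
      have hj : j < s.length := by omega
      rw [hls j hj]
      rcases Nat.lt_or_ge (j+1) s.length with h | h
      · rw [hls (j+1) h]; exact hmono j (j+1) (by omega) h
      · have hje : j + 1 = s.length := by omega
        rw [hje, hln]
        exact le_trans (hmem j hj).2 (by omega)
  have htel : ∀ kk, kk < s.length + 1 →
      ((compOf n X).take (kk+1)).sum = l.getD (kk+1) 0 := by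
    intro kk
    induction kk with
    | zero =>
      intro _
      rw [List.sum_take_succ _ 0 (by omega)]
      have : (compOf n X).take 0 = [] := List.take_zero
      rw [this, List.sum_nil, ← List.getD_eq_getElem _ 0 (by omega), hd 0 (by omega), hl0]
      omega
    | succ kk ih =>
      intro hkk
      rw [List.sum_take_succ _ (kk+1) (by omega)]
      rw [ih (by omega), ← List.getD_eq_getElem _ 0 (by omega), hd (kk+1) hkk]
      have h1 := hstep (kk+1) (by omega)
      omega
  rw [mem_setOfComp]
  have hxs : x ∈ s := (Finset.mem_sort (α := ℕ) (· ≤ ·)).mpr hx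
  obtain ⟨kk, hkk, hkx⟩ := List.getElem_of_mem hxs
  refine ⟨kk, by omega, ?_⟩
  rw [htel kk (by omega), hls kk hkk, List.getD_eq_getElem _ _ hkk, hkx]
/-! ### Structural lemmas for standard tableaux -/

lemma mcode_lb (x : MEntry) : 2 * x.1 - 1 ≤ mcode x := by
  unfold mcode; split <;> omega

lemma mcode_ub (x : MEntry) : mcode x ≤ 2 * x.1 := by
  unfold mcode; split <;> omega

lemma val_lt_of_mcode_le {x y : MEntry} (hx : 1 ≤ x.1) (hne : x.1 ≠ y.1)
    (h : mcode x ≤ mcode y) : x.1 < y.1 := by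
  have h1 := mcode_lb x
  have h2 := mcode_ub y
  omega

lemma mcode_true (v : ℕ) : mcode (v, true) = 2*v - 1 := rfl

lemma mcode_false (v : ℕ) : mcode (v, false) = 2*v := rfl

lemma stdk2_true {α : List ℕ} {T : Box → MEntry} {b : Box} (h : (T b).2 = true) :
    stdk2 α T b = b.2 := by
  unfold stdk2
  rw [h]
  simp

lemma stdk2_false {α : List ℕ} {T : Box → MEntry} {b : Box} (h : (T b).2 = false) :
    stdk2 α T b = α.length + 1 - b.2 := by
  unfold stdk2
  rw [h]
  simp

lemma peak_pos {γ : List ℕ} (h : PeakShape γ) {k : ℕ} (hk : k < γ.length) :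
    1 ≤ γ.getD k 0 := by
  rw [List.getD_eq_getElem _ _ hk]
  exact h.1 _ (List.getElem_mem _)

lemma inDiagram_mk {γ : List ℕ} {c r : ℕ} :
    inDiagram γ (c, r) ↔ 1 ≤ c ∧ 1 ≤ r ∧ r ≤ γ.length ∧ c ≤ γ.getD (r - 1) 0 :=
  Iff.rfl

lemma stage_iff {n : ℕ} {α : List ℕ} {S : Box → MEntry} (hM : IsMPCT n α S)
    {k : ℕ} (hk : k ≤ n) :
    ∃ γ : List ℕ, PeakShape γ ∧ ∀ b : Box, (inDiagram α b ∧ (S b).1 ≤ k) ↔ inDiagram γ b := by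
  obtain ⟨γ, h1, h2⟩ := hM.peak_filter k hk
  refine ⟨γ, h1, fun b => ?_⟩
  rw [Set.ext_iff] at h2
  exact h2 b

lemma val_lt_row {n : ℕ} {α : List ℕ} {S : Box → MEntry} (hM : IsMPCT n α S)
    (huniq : ∀ b b', inDiagram α b → inDiagram α b' → (S b).1 = (S b').1 → b = b')
    {c c' r : ℕ} (hcc : c < c') (h1 : inDiagram α (c, r)) (h2 : inDiagram α (c', r)) :
    (S (c, r)).1 < (S (c', r)).1 := by
  have h := (hM.row_weak c c' r hcc h1 h2).1
  refine val_lt_of_mcode_le (hM.pos _ h1) ?_ h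
  intro he
  have heq := huniq _ _ h1 h2 he
  rw [Prod.mk.injEq] at heq
  omega

lemma val_lt_col {n : ℕ} {α : List ℕ} {S : Box → MEntry} (hM : IsMPCT n α S)
    (huniq : ∀ b b', inDiagram α b → inDiagram α b' → (S b).1 = (S b').1 → b = b')
    {r r' : ℕ} (hrr : r < r') (h1 : inDiagram α (1, r)) (h2 : inDiagram α (1, r')) :
    (S (1, r)).1 < (S (1, r')).1 := by
  have h := hM.col_strict r r' hrr h1 h2
  refine val_lt_of_mcode_le (hM.pos _ h1) ?_ (le_of_lt h)
  intro he
  have heq := huniq _ _ h1 h2 he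
  rw [Prod.mk.injEq] at heq
  omega

lemma lemK {n : ℕ} {α : List ℕ} {S : Box → MEntry} (hM : IsMPCT n α S)
    (huniq : ∀ b b', inDiagram α b → inDiagram α b' → (S b).1 = (S b').1 → b = b')
    (hbd : ∀ b, inDiagram α b → (S b).1 ≤ n)
    {r : ℕ} (h1 : inDiagram α (1, r+1)) (h2 : inDiagram α (2, r)) :
    (S (2, r)).1 < (S (1, r+1)).1 := by
  have hj1 : 1 ≤ (S (1, r+1)).1 := hM.pos _ h1
  have hjn : (S (1, r+1)).1 ≤ n := hbd _ h1
  obtain ⟨hc2, hr1, hrlen, hcd⟩ := inDiagram_mk.mp h2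
  have h1r : inDiagram α (1, r) := inDiagram_mk.mpr ⟨le_refl 1, hr1, hrlen, by omega⟩
  have hvr : (S (1, r)).1 < (S (1, r+1)).1 := val_lt_col hM huniq (by omega) h1r h1
  obtain ⟨γ, hγ, E⟩ := stage_iff hM (k := (S (1, r+1)).1 - 1) (by omega)
  have m1 : inDiagram γ (1, r) := (E _).mp ⟨h1r, by omega⟩
  have hrlenγ : r ≤ γ.length := (inDiagram_mk.mp m1).2.2.1
  have m2 : ¬ inDiagram γ (1, r+1) := by
    intro hh
    have := ((E _).mpr hh).2
    omega
  have hγlen : γ.length = r := by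
    by_contra hne
    have hrc : r + 1 ≤ γ.length := by omega
    refine m2 (inDiagram_mk.mpr ⟨le_refl 1, by omega, hrc, ?_⟩)
    have := peak_pos hγ (show r + 1 - 1 < γ.length by omega)
    omega
  obtain ⟨γ', hγ', E'⟩ := stage_iff hM (k := (S (1, r+1)).1) hjn
  have m3 : inDiagram γ' (1, r+1) := (E' _).mp ⟨h1, le_refl _⟩
  have hlen' : r + 1 ≤ γ'.length := (inDiagram_mk.mp m3).2.2.1
  have hgd : 1 < γ'.getD (r-1) 0 := hγ'.2 (r-1) (by omega)
  have m4 : inDiagram γ' (2, r) := inDiagram_mk.mpr ⟨by omega, hr1, by omega, by omega⟩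
  have hle2 := ((E' _).mpr m4).2
  have hne2 : (S (2, r)).1 ≠ (S (1, r+1)).1 := by
    intro he
    have heq := huniq _ _ h2 h1 he
    rw [Prod.mk.injEq] at heq
    omega
  omega

lemma no_jump {n : ℕ} {α : List ℕ} {S : Box → MEntry} (hM : IsMPCT n α S)
    (huniq : ∀ b b', inDiagram α b → inDiagram α b' → (S b).1 = (S b').1 → b = b')
    {i r : ℕ} {b' : Box} (hd1 : inDiagram α (1, r)) (hdb : inDiagram α b')
    (hv1 : (S (1, r)).1 = i) (hv2 : (S b').1 = i + 1) (hin : i + 1 ≤ n) :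
    b'.2 ≤ r := by
  by_contra hcon
  push_neg at hcon
  have hi1 : 1 ≤ i := by have := hM.pos _ hd1; omega
  have hr1 : (1:ℕ) ≤ r := (inDiagram_mk.mp hd1).2.1
  obtain ⟨γ, hγ, E⟩ := stage_iff hM (k := i) (by omega)
  have m1 : inDiagram γ (1, r) := (E _).mp ⟨hd1, by omega⟩
  have hrlenγ : r ≤ γ.length := (inDiagram_mk.mp m1).2.2.1
  have not2 : ¬ inDiagram γ (2, r) := by
    intro hh
    obtain ⟨hda, hvle⟩ := (E _).mpr hh
    have := val_lt_row hM huniq (show (1:ℕ) < 2 by omega) hd1 hda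
    omega
  have hγlen : γ.length = r := by
    rcases Nat.lt_or_ge r γ.length with h | h
    · have hg := hγ.2 (r-1) (by omega)
      exact absurd (inDiagram_mk.mpr ⟨one_le_two, hr1, by omega, by omega⟩) not2
    · omega
  obtain ⟨γ', hγ', E'⟩ := stage_iff hM (k := i+1) hin
  have m3 : inDiagram γ' b' := (E' _).mp ⟨hdb, by omega⟩
  have hlen' : b'.2 ≤ γ'.length := m3.2.2.1
  have hg' := hγ'.2 (r-1) (by omega)
  have m4 : inDiagram γ' (2, r) := inDiagram_mk.mpr ⟨one_le_two, hr1, by omega, by omega⟩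
  obtain ⟨hda2, hvle2⟩ := (E' _).mpr m4
  have hgt : i < (S (2, r)).1 := by
    have := val_lt_row hM huniq (show (1:ℕ) < 2 by omega) hd1 hda2
    omega
  have heqv : (S (2, r)).1 = i + 1 := by omega
  have heqb := huniq _ _ hda2 hdb (by rw [heqv, hv2])
  rw [← heqb] at hcon
  exact absurd hcon (lt_irrefl r)

lemma nondes {n : ℕ} {α : List ℕ} {S : Box → MEntry} {i : ℕ} {a b : Box}
    (hnd : i ∉ DesM n α S) (hi : 1 ≤ i) (hin : i + 1 ≤ n)
    (ha : a ∈ diagramFinset α) (hb : b ∈ diagramFinset α)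
    (hva : (S a).1 = i) (hvb : (S b).1 = i + 1) :
    ((S b).2 = true → a.2 < b.2) ∧ ((S a).2 = false → b.2 ≤ a.2) := by
  have hIcc : i ∈ Finset.Icc 1 (n-1) := Finset.mem_Icc.mpr ⟨hi, by omega⟩
  have hnd2 : ¬ ∃ x ∈ diagramFinset α, ∃ x' ∈ diagramFinset α,
      (S x).1 = i ∧ (S x').1 = i + 1 ∧
      (((S x).2 = false ∧ x.2 < x'.2) ∨ ((S x').2 = true ∧ x'.2 ≤ x.2)) := by
    intro hp
    exact hnd (Finset.mem_filter.mpr ⟨hIcc, hp⟩)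
  constructor
  · intro hm
    by_contra hc
    push_neg at hc
    exact hnd2 ⟨a, ha, b, hb, hva, hvb, Or.inr ⟨hm, hc⟩⟩
  · intro hm
    by_contra hc
    push_neg at hc
    exact hnd2 ⟨a, ha, b, hb, hva, hvb, Or.inl ⟨hm, hc⟩⟩

lemma chainB1 {n : ℕ} {α : List ℕ} {S : Box → MEntry} {B : ℕ → Box}
    (hB : ∀ i, 1 ≤ i → i ≤ n → B i ∈ diagramFinset α ∧ (S (B i)).1 = i)
    (d : ℕ) : ∀ i, 1 ≤ i → i + d ≤ n →
    (∀ k, i ≤ k → k < i + d → k ∉ DesM n α S) →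
    (S (B i)).2 = false →
    (S (B (i + d))).2 = false ∧ (B (i + d)).2 ≤ (B i).2 := by
  induction d with
  | zero => exact fun i _ _ _ hm => ⟨hm, Nat.le_refl _⟩
  | succ d ih =>
    intro i hi hdn hnd hm
    obtain ⟨hm', hle⟩ := ih i hi (by omega) (fun k h1 h2 => hnd k h1 (by omega)) hm
    have h := nondes (hnd (i + d) (by omega) (by omega)) (by omega) (by omega)
      (hB (i+d) (by omega) (by omega)).1 (hB (i+d+1) (by omega) (by omega)).1
      (hB (i+d) (by omega) (by omega)).2 (hB (i+d+1) (by omega) (by omega)).2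
    have hmk1 : (S (B (i+d+1))).2 = false := by
      cases hmm : (S (B (i+d+1))).2
      · rfl
      · have h1 := h.1 hmm
        have h2 := h.2 hm'
        omega
    exact ⟨hmk1, le_trans (h.2 hm') hle⟩

lemma chainB2 {n : ℕ} {α : List ℕ} {S : Box → MEntry} {B : ℕ → Box}
    (hB : ∀ i, 1 ≤ i → i ≤ n → B i ∈ diagramFinset α ∧ (S (B i)).1 = i)
    (d : ℕ) : ∀ i, 1 ≤ i → i + d ≤ n →
    (∀ k, i ≤ k → k < i + d → k ∉ DesM n α S) →
    (S (B (i + d))).2 = true →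
    (S (B i)).2 = true ∧ (B i).2 + d ≤ (B (i + d)).2 := by
  induction d with
  | zero => exact fun i _ _ _ hm => ⟨hm, Nat.le_refl _⟩
  | succ d ih =>
    intro i hi hdn hnd hm
    have h := nondes (hnd (i + d) (by omega) (by omega)) (by omega) (by omega)
      (hB (i+d) (by omega) (by omega)).1 (hB (i+d+1) (by omega) (by omega)).1
      (hB (i+d) (by omega) (by omega)).2 (hB (i+d+1) (by omega) (by omega)).2
    have hrow : (B (i+d)).2 < (B (i+d+1)).2 := h.1 hm
    have hmk : (S (B (i+d))).2 = true := by
      cases hc : (S (B (i+d))).2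
      · have := h.2 hc; omega
      · rfl
    obtain ⟨h1, h2⟩ := ih i hi (by omega) (fun k hk1 hk2 => hnd k hk1 (by omega)) hmk
    have hfin : (B i).2 + (d + 1) ≤ (B (i+d+1)).2 := by omega
    exact ⟨h1, hfin⟩

theorem stmt2 (n : ℕ) (α : List ℕ) (hα : IsPeakComposition n α)
    (S : Box → MEntry) (hS : InSMPCT n α S)
    (β : List ℕ) (hβ : IsComposition n β)
    (href : Refines β (compOf n (DesM n α S))) :
    ∃! T : Box → MEntry, InMPCT n α T ∧ wtList α T = β ∧ stdize α T = S := by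
  classical
  obtain ⟨⟨hαpos, hαsum⟩, hαpeak⟩ := hα
  obtain ⟨⟨hMS, hSwt0⟩, hSwt1⟩ := hS
  obtain ⟨hβpos, hβsum⟩ := hβ
  rcases Nat.eq_zero_or_pos n with hn0 | hn
  · -- degenerate case n = 0
    subst hn0
    have hαnil : α = [] := by
      cases α with
      | nil => rfl
      | cons a t =>
        have h1 : 0 < a := hαpos a (by simp)
        rw [List.sum_cons] at hαsum
        omega
    have hβnil : β = [] := by
      cases β with
      | nil => rfl
      | cons a t =>
        have h1 : 0 < a := hβpos a (by simp)
        rw [List.sum_cons] at hβsum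
        omega
    subst hαnil
    subst hβnil
    have hnotin : ∀ b : Box, ¬ inDiagram [] b := by
      rintro ⟨c, r⟩ h
      obtain ⟨_, h2, h3, _⟩ := inDiagram_mk.mp h
      simp only [List.length_nil] at h3
      omega
    have hD : diagramFinset [] = ∅ := by
      ext b
      simp only [mem_diagramFinset, Finset.notMem_empty, iff_false]
      exact hnotin b
    have hps : PeakShape ([] : List ℕ) := by
      constructor
      · intro a ha; exact absurd ha List.not_mem_nil
      · intro i hi; simp at hi
    refine ⟨fun _ => (0, false), ⟨⟨?_, ?_⟩, ?_, ?_⟩, ?_⟩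
    · constructor
      · intro b _; rfl
      · intro b hb; exact absurd hb (hnotin b)
      · intro c c' r _ hb _; exact absurd hb (hnotin _)
      · intro r r' _ hb _; exact absurd hb (hnotin _)
      · intro k _
        refine ⟨[], hps, ?_⟩
        ext b
        simp only [Set.mem_setOf_eq]
        constructor
        · rintro ⟨hb, _⟩; exact absurd hb (hnotin b)
        · intro hb; exact absurd hb (hnotin b)
      · intro r hb _ _; exact absurd hb (hnotin _)
    · intro i j _ _ _
      unfold wtFun
      rw [hD]
      rfl
    · unfold wtList
      rw [hD]
      rfl
    · funext b
      unfold stdize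
      rw [if_neg (hnotin b)]
      exact (hMS.offDiag b (hnotin b)).symm
    · rintro T' ⟨⟨hT'M, _⟩, _, _⟩
      funext b
      exact hT'M.offDiag b (hnotin b)
  · -- main case
    -- basic facts about S
    have hcard : (diagramFinset α).card = n := by rw [card_diagramFinset]; exact hαsum
    have hex : ∀ i, ∃ b, 1 ≤ i → i ≤ n → b ∈ diagramFinset α ∧ (S b).1 = i := by
      intro i
      by_cases hi : 1 ≤ i ∧ i ≤ n
      · have h1 := hSwt1 i hi.1 hi.2
        unfold wtFun at h1
        obtain ⟨b, hb⟩ := Finset.card_eq_one.mp h1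
        refine ⟨b, fun _ _ => ?_⟩
        have hbm : b ∈ (diagramFinset α).filter (fun x => (S x).1 = i) := by
          rw [hb]; exact Finset.mem_singleton_self b
        exact ⟨(Finset.mem_filter.mp hbm).1, (Finset.mem_filter.mp hbm).2⟩
      · exact ⟨(0,0), fun h1 h2 => absurd ⟨h1, h2⟩ hi⟩
    choose B hB using hex
    have hBmem : ∀ i, 1 ≤ i → i ≤ n → B i ∈ diagramFinset α := fun i h1 h2 => (hB i h1 h2).1
    have hBval : ∀ i, 1 ≤ i → i ≤ n → (S (B i)).1 = i := fun i h1 h2 => (hB i h1 h2).2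
    have hun : ∀ i, 1 ≤ i → i ≤ n → ∀ b ∈ diagramFinset α, (S b).1 = i → b = B i := by
      intro i h1 h2 b hb hv
      have hc := hSwt1 i h1 h2
      unfold wtFun at hc
      obtain ⟨x, hx⟩ := Finset.card_eq_one.mp hc
      have e1 : b ∈ (diagramFinset α).filter (fun y => (S y).1 = i) :=
        Finset.mem_filter.mpr ⟨hb, hv⟩
      have e2 : B i ∈ (diagramFinset α).filter (fun y => (S y).1 = i) :=
        Finset.mem_filter.mpr ⟨hBmem i h1 h2, hBval i h1 h2⟩
      rw [hx, Finset.mem_singleton] at e1 e2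
      rw [e1, e2]
    have himg : (Finset.Icc 1 n).image B = diagramFinset α := by
      apply Finset.eq_of_subset_of_card_le
      · intro b hb
        obtain ⟨i, hi, rfl⟩ := Finset.mem_image.mp hb
        rw [Finset.mem_Icc] at hi
        exact hBmem i hi.1 hi.2
      · rw [hcard, Finset.card_image_of_injOn, Nat.card_Icc]
        · omega
        · intro x hx y hy hxy
          rw [Finset.mem_coe, Finset.mem_Icc] at hx hy
          have e1 := hBval x hx.1 hx.2
          have e2 := hBval y hy.1 hy.2
          rw [hxy, e2] at e1
          exact e1.symm
    have hbd : ∀ b, inDiagram α b → 1 ≤ (S b).1 ∧ (S b).1 ≤ n := by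
      intro b hb
      have hb' : b ∈ diagramFinset α := mem_diagramFinset.mpr hb
      rw [← himg] at hb'
      obtain ⟨i, hi, rfl⟩ := Finset.mem_image.mp hb'
      rw [Finset.mem_Icc] at hi
      rw [hBval i hi.1 hi.2]
      exact hi
    have huniq : ∀ b b', inDiagram α b → inDiagram α b' → (S b).1 = (S b').1 → b = b' := by
      intro b b' hb hb' he
      have h1 := hbd b hb
      have e1 := hun ((S b).1) h1.1 h1.2 b (mem_diagramFinset.mpr hb) rfl
      have e2 := hun ((S b).1) h1.1 h1.2 b' (mem_diagramFinset.mpr hb') he.symm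
      rw [e1, e2]
    have htrans : ∀ (P : ℕ → Prop) (instP : DecidablePred P),
        ((diagramFinset α).filter (fun b => P ((S b).1))).card
          = ((Finset.Icc 1 n).filter P).card := by
      intro P instP
      refine Finset.card_bij' (fun b _ => (S b).1) (fun i _ => B i) ?_ ?_ ?_ ?_
      · intro a ha
        obtain ⟨haD, haP⟩ := Finset.mem_filter.mp ha
        have := hbd a (mem_diagramFinset.mp haD)
        exact Finset.mem_filter.mpr ⟨Finset.mem_Icc.mpr this, haP⟩
      · intro i hi
        obtain ⟨hiI, hiP⟩ := Finset.mem_filter.mp hi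
        rw [Finset.mem_Icc] at hiI
        refine Finset.mem_filter.mpr ⟨hBmem i hiI.1 hiI.2, ?_⟩
        rw [hBval i hiI.1 hiI.2]
        exact hiP
      · intro a ha
        obtain ⟨haD, _⟩ := Finset.mem_filter.mp ha
        have := hbd a (mem_diagramFinset.mp haD)
        exact (hun ((S a).1) this.1 this.2 a haD rfl).symm
      · intro i hi
        obtain ⟨hiI, _⟩ := Finset.mem_filter.mp hi
        rw [Finset.mem_Icc] at hiI
        exact hBval i hiI.1 hiI.2
    have hrank : ∀ b, inDiagram α b →
        ((diagramFinset α).filter (fun a => (S a).1 < (S b).1)).card = (S b).1 - 1 := by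
      intro b hb
      have h0 := htrans (fun x => x < (S b).1) inferInstance
      have he : (Finset.Icc 1 n).filter (fun x => x < (S b).1) = Finset.Icc 1 ((S b).1 - 1) := by
        ext x
        simp only [Finset.mem_filter, Finset.mem_Icc]
        have := hbd b hb
        omega
      rw [h0, he, Nat.card_Icc]
      omega
    -- descents sit inside the break set of β
    have hdes_sub : DesM n α S ⊆ setOfComp β := by
      intro i hi
      have hsub1 : DesM n α S ⊆ Finset.Icc 1 (n-1) := Finset.filter_subset _ _
      have h1 : i ∈ setOfComp (compOf n (DesM n α S)) :=
        mem_setOfComp_compOf (fun x hx => Finset.mem_Icc.mp (hsub1 hx)) hi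
      exact refines_setOfComp href h1
    -- block function facts
    have hblk_le : ∀ i v, 1 ≤ i → i ≤ n → (blk β i ≤ v ↔ i ≤ psum β v) := by
      intro i v h1 h2
      exact blk_le_iff β hβpos h1 (by omega)
    have hpsn : psum β β.length = n := by rw [ps_len]; exact hβsum
    have hlen1 : 1 ≤ β.length := by
      cases β with
      | nil => rw [List.sum_nil] at hβsum; omega
      | cons a t => simp
    have hblk_len : ∀ i, 1 ≤ i → i ≤ n → blk β i ≤ β.length := by
      intro i h1 h2
      exact (hblk_le i β.length h1 h2).mpr (by omega)
    have hblk_eq : ∀ i v, 1 ≤ i → i ≤ n → 1 ≤ v →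
        (blk β i = v ↔ psum β (v-1) < i ∧ i ≤ psum β v) := by
      intro i v h1 h2 hv
      exact blk_eq_iff β hβpos h1 (by omega) hv
    have hblk_mono : ∀ i i', 1 ≤ i → i ≤ i' → i' ≤ n → blk β i ≤ blk β i' := by
      intro i i' h1 h2 h3
      exact blk_mono β hβpos h1 h2 (by omega)
    have hsqueeze : ∀ i j k, 1 ≤ i → j ≤ n → i ≤ k → k + 1 ≤ j → blk β i = blk β j →
        blk β k = blk β (k+1) := by
      intro i j k h1 h2 h3 h4 h5
      have e1 := hblk_mono i k h1 h3 (by omega)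
      have e2 := hblk_mono k (k+1) (by omega) (by omega) (by omega)
      have e3 := hblk_mono (k+1) j (by omega) (by omega) h2
      omega
    have hnotdes : ∀ k, 1 ≤ k → k + 1 ≤ n → blk β k = blk β (k+1) → k ∉ DesM n α S := by
      intro k h1 h2 heq hk
      have hb := hdes_sub hk
      obtain ⟨_, _, hlt⟩ := blk_lt_of_break β hβpos hb
      omega
    -- the destandardised tableau
    set T : Box → MEntry :=
      fun b => if inDiagram α b then (blk β ((S b).1), (S b).2) else (0, false) with hT
    have hTval : ∀ b, inDiagram α b → T b = (blk β ((S b).1), (S b).2) := by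
      intro b hb
      rw [hT]
      exact if_pos hb
    have hToff : ∀ b, ¬ inDiagram α b → T b = (0, false) := by
      intro b hb
      rw [hT]
      exact if_neg hb
    -- chains specialised
    have hBp : ∀ i, 1 ≤ i → i ≤ n → B i ∈ diagramFinset α ∧ (S (B i)).1 = i :=
      fun i h1 h2 => ⟨hBmem i h1 h2, hBval i h1 h2⟩
    have hchain1 : ∀ d i, 1 ≤ i → i + d ≤ n → blk β i = blk β (i + d) →
        (S (B i)).2 = false → (S (B (i+d))).2 = false ∧ (B (i+d)).2 ≤ (B i).2 := by
      intro d i h1 h2 heq hm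
      exact chainB1 hBp d i h1 h2
        (fun k hk1 hk2 => hnotdes k (by omega) (by omega)
          (hsqueeze i (i+d) k (by omega) h2 hk1 (by omega) heq)) hm
    have hchain2 : ∀ d i, 1 ≤ i → i + d ≤ n → blk β i = blk β (i + d) →
        (S (B (i+d))).2 = true → (S (B i)).2 = true ∧ (B i).2 + d ≤ (B (i+d)).2 := by
      intro d i h1 h2 heq hm
      exact chainB2 hBp d i h1 h2
        (fun k hk1 hk2 => hnotdes k (by omega) (by omega)
          (hsqueeze i (i+d) k (by omega) h2 hk1 (by omega) heq)) hm
    -- the key order-comparison lemma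
    have hkey : ∀ a b : Box, inDiagram α a → inDiagram α b → (S a).1 < (S b).1 →
        keyLt α T a b := by
      intro a b ha hb hlt
      have hia := hbd a ha
      have hjb := hbd b hb
      have hBa : a = B ((S a).1) := hun _ hia.1 hia.2 a (mem_diagramFinset.mpr ha) rfl
      have hBb : b = B ((S b).1) := hun _ hjb.1 hjb.2 b (mem_diagramFinset.mpr hb) rfl
      have hd : (S a).1 + ((S b).1 - (S a).1) = (S b).1 := by omega
      have hmono := hblk_mono ((S a).1) ((S b).1) hia.1 (le_of_lt hlt) hjb.2
      have hTa : T a = (blk β ((S a).1), (S a).2) := hTval a ha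
      have hTb : T b = (blk β ((S b).1), (S b).2) := hTval b hb
      unfold keyLt
      rcases lt_or_eq_of_le hmono with hblt | hbeq
      · left
        rw [hTa, hTb]
        have l1 : mcode (blk β ((S a).1), (S a).2) ≤ 2 * blk β ((S a).1) :=
          mcode_ub (blk β ((S a).1), (S a).2)
        have l2 : 2 * blk β ((S b).1) - 1 ≤ mcode (blk β ((S b).1), (S b).2) :=
          mcode_lb (blk β ((S b).1), (S b).2)
        have l3 := blk_pos β ((S b).1)
        omega
      · cases hmb : (S b).2 with
      | true =>
        obtain ⟨hma0, hrow0⟩ := hchain2 ((S b).1 - (S a).1) ((S a).1) hia.1 (by omega)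
          (by rw [hd]; exact hbeq) (by rw [hd, ← hBb]; exact hmb)
        have hma : (S a).2 = true := by rw [hBa]; exact hma0
        have hrow : a.2 + ((S b).1 - (S a).1) ≤ b.2 := by
          rw [hd, ← hBb] at hrow0
          rw [← hBa] at hrow0
          exact hrow0
        have hTa' : T a = (blk β ((S b).1), true) := by rw [hTa, hma, hbeq]
        have hTb' : T b = (blk β ((S b).1), true) := by rw [hTb, hmb]
        right
        refine ⟨by rw [hTa', hTb'], Or.inl ?_⟩
        have sa : stdk2 α T a = a.2 := stdk2_true (by rw [hTa'])
        have sb : stdk2 α T b = b.2 := stdk2_true (by rw [hTb'])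
        rw [sa, sb]
        omega
      | false =>
        cases hma : (S a).2 with
        | true =>
          left
          have hTa' : T a = (blk β ((S b).1), true) := by rw [hTa, hma, hbeq]
          have hTb' : T b = (blk β ((S b).1), false) := by rw [hTb, hmb]
          rw [hTa', hTb', mcode_true, mcode_false]
          have l3 := blk_pos β ((S b).1)
          omega
        | false =>
          obtain ⟨_, hrow0⟩ := hchain1 ((S b).1 - (S a).1) ((S a).1) hia.1 (by omega)
            (by rw [hd]; exact hbeq) (by rw [← hBa]; exact hma)
          have hrow : b.2 ≤ a.2 := by
            rw [hd, ← hBb, ← hBa] at hrow0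
            exact hrow0
          rcases lt_or_eq_of_le hrow with hlt2 | heq2
          · have hTa' : T a = (blk β ((S b).1), false) := by rw [hTa, hma, hbeq]
            have hTb' : T b = (blk β ((S b).1), false) := by rw [hTb, hmb]
            right
            refine ⟨by rw [hTa', hTb'], Or.inl ?_⟩
            have sa : stdk2 α T a = α.length + 1 - a.2 := stdk2_false (by rw [hTa'])
            have sb : stdk2 α T b = α.length + 1 - b.2 := stdk2_false (by rw [hTb'])
            rw [sa, sb]
            have haup : a.2 ≤ α.length := ha.2.2.1
            omega
          · have hr : a.2 = b.2 := heq2.symm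
            have hcc : a.1 < b.1 := by
              rcases Nat.lt_trichotomy a.1 b.1 with h | h | h
              · exact h
              · exfalso
                have heab : a = b := Prod.ext h hr
                rw [heab] at hlt
                omega
              · exfalso
                have ha' : inDiagram α (a.1, a.2) := ha
                have hb' : inDiagram α (b.1, a.2) := by rw [hr]; exact hb
                have h2 : (S ((b.1 : ℕ), (a.2 : ℕ))).1 < (S a).1 :=
                  val_lt_row hMS huniq h hb' ha'
                have h3 : (S b).1 < (S a).1 := by
                  rw [show ((b.1, a.2) : Box) = b from by rw [hr]] at h2
                  exact h2
                omega
            have hTa' : T a = (blk β ((S b).1), false) := by rw [hTa, hma, hbeq]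
            have hTb' : T b = (blk β ((S b).1), false) := by rw [hTb, hmb]
            have sa : stdk2 α T a = α.length + 1 - a.2 := stdk2_false (by rw [hTa'])
            have sb : stdk2 α T b = α.length + 1 - b.2 := stdk2_false (by rw [hTb'])
            right
            refine ⟨by rw [hTa', hTb'], Or.inr ⟨by rw [sa, sb, hr], hcc⟩⟩
    have hirr : ∀ a : Box, ¬ keyLt α T a a := by
      intro a h
      unfold keyLt at h
      rcases h with h | ⟨_, h | ⟨_, h⟩⟩ <;> omega
    have hasym : ∀ a b : Box, keyLt α T a b → keyLt α T b a → False := by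
      intro a b h1 h2
      unfold keyLt at h1 h2
      rcases h1 with h1 | ⟨e1, h1 | ⟨e1', h1⟩⟩ <;> rcases h2 with h2 | ⟨e2, h2 | ⟨e2', h2⟩⟩ <;> omega
    have hfilter_eq : ∀ b, inDiagram α b →
        (diagramFinset α).filter (fun a => keyLt α T a b)
          = (diagramFinset α).filter (fun a => (S a).1 < (S b).1) := by
      intro b hb
      ext a
      simp only [Finset.mem_filter, and_congr_right_iff]
      intro haD
      have ha := mem_diagramFinset.mp haD
      constructor
      · intro h
        rcases Nat.lt_trichotomy ((S a).1) ((S b).1) with hh | hh | hh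
        · exact hh
        · exfalso
          have he := huniq a b ha hb hh
          rw [he] at h
          exact hirr b h
        · exact (hasym a b h (hkey b a hb ha hh)).elim
      · exact hkey a b ha hb
    have hstd : stdize α T = S := by
      funext b
      by_cases hb : inDiagram α b
      · unfold stdize
        rw [if_pos hb, hfilter_eq b hb, hrank b hb]
        have h1 := (hbd b hb).1
        have e2 : (T b).2 = (S b).2 := by rw [hTval b hb]
        rw [e2]
        have e3 : (S b).1 - 1 + 1 = (S b).1 := by omega
        rw [e3]
      · unfold stdize
        rw [if_neg hb]
        exact (hMS.offDiag b hb).symm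
    -- T is an MPCT
    have hTM : IsMPCT n α T := by
      constructor
      · exact hToff
      · intro b hb
        rw [hTval b hb]
        exact blk_pos β _
      · -- row_weak
        intro c c' r hcc h1 h2
        have hv := val_lt_row hMS huniq hcc h1 h2
        have hi := hbd _ h1
        have hj := hbd _ h2
        have hTa : T (c, r) = (blk β ((S (c,r)).1), (S (c,r)).2) := hTval _ h1
        have hTb : T (c', r) = (blk β ((S (c',r)).1), (S (c',r)).2) := hTval _ h2
        have hmono := hblk_mono _ _ hi.1 (le_of_lt hv) hj.2
        have hBa : ((c : ℕ), (r : ℕ)) = B ((S (c,r)).1) :=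
          hun _ hi.1 hi.2 _ (mem_diagramFinset.mpr h1) rfl
        have hBb : ((c' : ℕ), (r : ℕ)) = B ((S (c',r)).1) :=
          hun _ hj.1 hj.2 _ (mem_diagramFinset.mpr h2) rfl
        have hd : (S (c,r)).1 + ((S (c',r)).1 - (S (c,r)).1) = (S (c',r)).1 := by omega
        have hmbF : blk β ((S (c,r)).1) = blk β ((S (c',r)).1) → (S (c',r)).2 = false := by
          intro hbeq
          cases hmm : (S (c',r)).2
          · rfl
          · exfalso
            obtain ⟨hma0, hrow0⟩ := hchain2 ((S (c',r)).1 - (S (c,r)).1) ((S (c,r)).1)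
              hi.1 (by omega) (by rw [hd]; exact hbeq) (by rw [hd, ← hBb]; exact hmm)
            rw [hd, ← hBb] at hrow0
            rw [← hBa] at hrow0
            have hfin : r + ((S (c',r)).1 - (S (c,r)).1) ≤ r := hrow0
            omega
        constructor
        · rcases lt_or_eq_of_le hmono with hblt | hbeq
          · rw [hTa, hTb]
            have l1 : mcode (blk β ((S (c,r)).1), (S (c,r)).2) ≤ 2 * blk β ((S (c,r)).1) :=
              mcode_ub (blk β ((S (c,r)).1), (S (c,r)).2)
            have l2 : 2 * blk β ((S (c',r)).1) - 1 ≤ mcode (blk β ((S (c',r)).1), (S (c',r)).2) :=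
              mcode_lb (blk β ((S (c',r)).1), (S (c',r)).2)
            have l3 := blk_pos β ((S (c',r)).1)
            omega
          · have hmb := hmbF hbeq
            rw [hTa, hTb, hmb, hbeq]
            cases hma : (S (c,r)).2
            · exact le_refl _
            · rw [mcode_true, mcode_false]
              omega
        · intro hmT heqT
          have hma : (S (c,r)).2 = true := by rw [hTa] at hmT; exact hmT
          have heq2 : (blk β ((S (c,r)).1), (S (c,r)).2)
              = (blk β ((S (c',r)).1), (S (c',r)).2) := by
            rw [← hTa, ← hTb]; exact heqT
          rw [Prod.mk.injEq] at heq2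
          have hmb : (S (c',r)).2 = true := by rw [← heq2.2]; exact hma
          have hx := hmbF heq2.1
          rw [hmb] at hx
          exact Bool.noConfusion hx
      · -- col_strict
        intro r r' hrr h1 h2
        have hv := val_lt_col hMS huniq hrr h1 h2
        have hi := hbd _ h1
        have hj := hbd _ h2
        have hTa : T (1, r) = (blk β ((S (1,r)).1), (S (1,r)).2) := hTval _ h1
        have hTb : T (1, r') = (blk β ((S (1,r')).1), (S (1,r')).2) := hTval _ h2
        have hmono := hblk_mono _ _ hi.1 (le_of_lt hv) hj.2
        rcases lt_or_eq_of_le hmono with hblt | hbeq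
        · rw [hTa, hTb]
          have l1 : mcode (blk β ((S (1,r)).1), (S (1,r)).2) ≤ 2 * blk β ((S (1,r)).1) :=
            mcode_ub (blk β ((S (1,r)).1), (S (1,r)).2)
          have l2 : 2 * blk β ((S (1,r')).1) - 1 ≤ mcode (blk β ((S (1,r')).1), (S (1,r')).2) :=
            mcode_lb (blk β ((S (1,r')).1), (S (1,r')).2)
          have l3 := blk_pos β ((S (1,r')).1)
          omega
        · have hBa : ((1 : ℕ), (r : ℕ)) = B ((S (1,r)).1) :=
            hun _ hi.1 hi.2 _ (mem_diagramFinset.mpr h1) rfl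
          have hBb : ((1 : ℕ), (r' : ℕ)) = B ((S (1,r')).1) :=
            hun _ hj.1 hj.2 _ (mem_diagramFinset.mpr h2) rfl
          have hd : (S (1,r)).1 + ((S (1,r')).1 - (S (1,r)).1) = (S (1,r')).1 := by omega
          have hmb : (S (1,r')).2 = false := by
            cases hmm : (S (1,r')).2
            · rfl
            · exfalso
              have hd2 : ((S (1,r)).1 + 1) + ((S (1,r')).1 - ((S (1,r)).1 + 1))
                  = (S (1,r')).1 := by omega
              have hble : blk β ((S (1,r)).1 + 1) = blk β ((S (1,r')).1) := by
                have e1 := hblk_mono ((S (1,r)).1) ((S (1,r)).1 + 1) hi.1 (by omega) (by omega)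
                have e2 := hblk_mono ((S (1,r)).1 + 1) ((S (1,r')).1) (by omega) (by omega) hj.2
                omega
              have hm1 : (S (B ((S (1,r)).1 + 1))).2 = true :=
                (hchain2 ((S (1,r')).1 - ((S (1,r)).1 + 1)) ((S (1,r)).1 + 1) (by omega)
                  (by omega) (by rw [hd2]; exact hble) (by rw [hd2, ← hBb]; exact hmm)).1
              have hnd := hnotdes ((S (1,r)).1) hi.1 (by omega)
                (hsqueeze ((S (1,r)).1) ((S (1,r')).1) ((S (1,r)).1) hi.1 hj.2
                  (le_refl _) (by omega) hbeq)
              have hstep := nondes hnd hi.1 (by omega) (mem_diagramFinset.mpr h1)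
                (hBmem ((S (1,r)).1 + 1) (by omega) (by omega)) rfl
                (hBval ((S (1,r)).1 + 1) (by omega) (by omega))
              have hrowgt : r < (B ((S (1,r)).1 + 1)).2 := hstep.1 hm1
              have hle := no_jump hMS huniq h1
                (mem_diagramFinset.mp (hBmem ((S (1,r)).1 + 1) (by omega) (by omega))) rfl
                (hBval ((S (1,r)).1 + 1) (by omega) (by omega)) (by omega)
              omega
          have hma : (S (1,r)).2 = true := by
            cases hmm : (S (1,r)).2
            · exfalso
              have hc1 := hchain1 ((S (1,r')).1 - (S (1,r)).1) ((S (1,r)).1) hi.1 (by omega)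
                (by rw [hd]; exact hbeq) (by rw [← hBa]; exact hmm)
              have h2' := hc1.2
              rw [hd, ← hBb] at h2'
              rw [← hBa] at h2'
              have hfin : r' ≤ r := h2'
              omega
            · rfl
          have hTa' : T (1,r) = (blk β ((S (1,r')).1), true) := by rw [hTa, hma, hbeq]
          have hTb' : T (1,r') = (blk β ((S (1,r')).1), false) := by rw [hTb, hmb]
          rw [hTa', hTb', mcode_true, mcode_false]
          have := blk_pos β ((S (1,r')).1)
          omega
      · -- peak_filter
        intro k hk
        by_cases hk0 : k = 0
        · subst hk0
          refine ⟨[], ⟨fun a ha => absurd ha List.not_mem_nil, fun i hi => by simp at hi⟩, ?_⟩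
          ext b
          simp only [Set.mem_setOf_eq]
          constructor
          · rintro ⟨hbD, hle⟩
            have h1 := blk_pos β ((S b).1)
            rw [hTval b hbD] at hle
            have h2 : blk β ((S b).1) ≤ 0 := hle
            omega
          · rintro ⟨_, h2, h3, _⟩
            simp only [List.length_nil] at h3
            omega
        · obtain ⟨γ, hγ, E⟩ := stage_iff hMS (k := psum β k)
            (by have := ps_le_sum β k; omega)
          refine ⟨γ, hγ, ?_⟩
          ext b
          simp only [Set.mem_setOf_eq]
          rw [← E b]
          constructor
          · rintro ⟨hbD, hle⟩
            refine ⟨hbD, ?_⟩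
            have hvb := hbd b hbD
            rw [hTval b hbD] at hle
            have h2 : blk β ((S b).1) ≤ k := hle
            exact (hblk_le ((S b).1) k hvb.1 hvb.2).mp h2
          · rintro ⟨hbD, hle⟩
            refine ⟨hbD, ?_⟩
            rw [hTval b hbD]
            have h2 : blk β ((S b).1) ≤ k :=
              (hblk_le ((S b).1) k (hbd b hbD).1 (hbd b hbD).2).mpr hle
            exact h2
      · -- MPCT4
        intro r h2 h1 hmm hcon
        rw [hTval _ h1, hTval _ h2] at hcon
        have hcon' : blk β ((S (1, r+1)).1) = blk β ((S (2, r)).1) := hcon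
        have hma : (S (2,r)).2 = false := by
          rw [hTval _ h2] at hmm
          exact hmm
        have hKK := lemK hMS huniq (fun b hb => (hbd b hb).2) h1 h2
        have hi := hbd _ h2
        have hj := hbd _ h1
        have hBa : ((2 : ℕ), (r : ℕ)) = B ((S (2,r)).1) :=
          hun _ hi.1 hi.2 _ (mem_diagramFinset.mpr h2) rfl
        have hBb : ((1 : ℕ), (r + 1 : ℕ)) = B ((S (1,r+1)).1) :=
          hun _ hj.1 hj.2 _ (mem_diagramFinset.mpr h1) rfl
        have hd : (S (2,r)).1 + ((S (1,r+1)).1 - (S (2,r)).1) = (S (1,r+1)).1 := by omega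
        have hc1 := hchain1 ((S (1,r+1)).1 - (S (2,r)).1) ((S (2,r)).1) hi.1 (by omega)
          (by rw [hd]; omega) (by rw [← hBa]; exact hma)
        have h2' := hc1.2
        rw [hd, ← hBb] at h2'
        rw [← hBa] at h2'
        have hfin : r + 1 ≤ r := h2'
        omega
    -- weight computations
    have hwtT : ∀ v, wtFun α T v = ((Finset.Icc 1 n).filter (fun x => blk β x = v)).card := by
      intro v
      unfold wtFun
      have h0 := htrans (fun x => blk β x = v) inferInstance
      have hset : (diagramFinset α).filter (fun b => (T b).1 = v)
          = (diagramFinset α).filter (fun b => blk β ((S b).1) = v) := by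
        ext x
        simp only [Finset.mem_filter]
        constructor
        · rintro ⟨hx, he⟩
          refine ⟨hx, ?_⟩
          rw [hTval x (mem_diagramFinset.mp hx)] at he
          exact he
        · rintro ⟨hx, he⟩
          refine ⟨hx, ?_⟩
          rw [hTval x (mem_diagramFinset.mp hx)]
          exact he
      rw [hset]
      exact h0
    have hwtT2 : ∀ v, 1 ≤ v → v ≤ β.length → wtFun α T v = β.getD (v-1) 0 := by
      intro v h1 h2
      have hIccblk : (Finset.Icc 1 n).filter (fun x => blk β x = v)
          = Finset.Icc (psum β (v-1) + 1) (psum β v) := by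
        ext x
        simp only [Finset.mem_filter, Finset.mem_Icc]
        constructor
        · rintro ⟨⟨hx1, hxn⟩, hbx⟩
          have := (hblk_eq x v hx1 hxn h1).mp hbx
          omega
        · rintro ⟨ha, hb2⟩
          have hx1 : 1 ≤ x := by omega
          have hxn : x ≤ n := by
            have := ps_le_sum β v
            omega
          exact ⟨⟨hx1, hxn⟩, (hblk_eq x v hx1 hxn h1).mpr ⟨by omega, hb2⟩⟩
      rw [hwtT, hIccblk, Nat.card_Icc]
      have hps := ps_succ β (show v - 1 < β.length by omega)
      have hv : v - 1 + 1 = v := by omega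
      rw [hv] at hps
      omega
    have hwtT0 : ∀ v, β.length < v → wtFun α T v = 0 := by
      intro v hv
      rw [hwtT, Finset.card_eq_zero, Finset.filter_eq_empty_iff]
      intro x hx
      rw [Finset.mem_Icc] at hx
      have := hblk_len x hx.1 hx.2
      omega
    have hsup : (diagramFinset α).sup (fun b => (T b).1) = β.length := by
      apply le_antisymm
      · apply Finset.sup_le
        intro b hb
        have hbD := mem_diagramFinset.mp hb
        have hvb := hbd b hbD
        rw [hTval b hbD]
        exact hblk_len _ hvb.1 hvb.2
      · have hBn := hBmem n (by omega) (le_refl n)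
        have hfn : blk β n = β.length := by
          rw [hblk_eq n β.length (by omega) (le_refl n) hlen1]
          have hstr := ps_strict β hβpos (show β.length - 1 < β.length by omega) (le_refl _)
          constructor
          · omega
          · omega
        have hTn : (T (B n)).1 = β.length := by
          rw [hTval _ (mem_diagramFinset.mp hBn)]
          show blk β ((S (B n)).1) = β.length
          rw [hBval n (by omega) (le_refl n), hfn]
        calc β.length = (T (B n)).1 := hTn.symm
          _ ≤ _ := Finset.le_sup (f := fun b => (T b).1) hBn
    have hwl : wtList α T = β := by
      unfold wtList
      rw [hsup]
      apply List.ext_getElem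
      · simp
      · intro i hi1 hi2
        rw [List.getElem_map, List.getElem_range]
        rw [hwtT2 (i+1) (by omega) (by omega)]
        have e : i + 1 - 1 = i := rfl
        rw [e, List.getD_eq_getElem _ _ hi2]
    have hz : ∀ i j, 1 ≤ i → i < j → wtFun α T i = 0 → wtFun α T j = 0 := by
      intro i j h1 hij hzi
      have hilen : β.length < i := by
        by_contra hc
        push_neg at hc
        have h2 := hwtT2 i h1 hc
        have hm2 : β.getD (i-1) 0 ∈ β := by
          rw [List.getD_eq_getElem _ _ (show i - 1 < β.length by omega)]
          exact List.getElem_mem _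
        have := hβpos _ hm2
        omega
      exact hwtT0 j (by omega)
    refine ⟨T, ⟨⟨hTM, hz⟩, hwl, hstd⟩, ?_⟩
    rintro T' ⟨⟨hT'M, _⟩, hwl', hstd'⟩
    -- the weight of T' agrees with β
    have hsup' : (diagramFinset α).sup (fun b => (T' b).1) = β.length := by
      have hlen := congrArg List.length hwl'
      unfold wtList at hlen
      rw [List.length_map, List.length_range] at hlen
      exact hlen
    have hwt' : ∀ u, u < β.length → wtFun α T' (u+1) = β.getD u 0 := by
      intro u hu
      have hu2 : u < (wtList α T').length := by
        rw [hwl']; exact hu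
      have e2 := List.getElem_of_eq hwl' hu2
      simp only [wtList, List.getElem_map, List.getElem_range] at e2
      rw [e2, List.getD_eq_getElem _ _ hu]
    have hwt'0 : ∀ u, β.length < u → wtFun α T' u = 0 := by
      intro u hu
      unfold wtFun
      rw [Finset.card_eq_zero, Finset.filter_eq_empty_iff]
      intro b hb
      have hle := Finset.le_sup (f := fun b => (T' b).1) hb
      rw [hsup'] at hle
      intro hequ
      omega
    -- cumulative counts
    have hcum : ∀ v, ((diagramFinset α).filter (fun a => (T' a).1 ≤ v)).card = psum β v := by
      intro v
      induction v with
      | zero =>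
        have hps0 : psum β 0 = 0 := rfl
        rw [hps0, Finset.card_eq_zero, Finset.filter_eq_empty_iff]
        intro b hb
        have := hT'M.pos b (mem_diagramFinset.mp hb)
        omega
      | succ v ih =>
        have hsplit : (diagramFinset α).filter (fun a => (T' a).1 ≤ v + 1)
            = (diagramFinset α).filter (fun a => (T' a).1 ≤ v)
              ∪ (diagramFinset α).filter (fun a => (T' a).1 = v + 1) := by
          ext x
          simp only [Finset.mem_union, Finset.mem_filter]
          constructor
          · rintro ⟨hx, hle⟩
            rcases Nat.lt_or_ge ((T' x).1) (v+1) with h | h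
            · exact Or.inl ⟨hx, by omega⟩
            · exact Or.inr ⟨hx, by omega⟩
          · rintro (⟨hx, h⟩ | ⟨hx, h⟩)
            · exact ⟨hx, by omega⟩
            · exact ⟨hx, by omega⟩
        rw [hsplit, Finset.card_union_of_disjoint]
        · rw [ih]
          have hwtdef : ((diagramFinset α).filter (fun a => (T' a).1 = v + 1)).card
              = wtFun α T' (v+1) := rfl
          rw [hwtdef]
          rcases Nat.lt_or_ge v β.length with h | h
          · rw [hwt' v h, ps_succ β h]
          · rw [hwt'0 (v+1) (by omega)]
            have e1 : psum β (v+1) = β.sum := ps_of_ge β (by omega)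
            have e2 : psum β v = β.sum := ps_of_ge β h
            omega
        · rw [Finset.disjoint_left]
          intro a h1 h2
          rw [Finset.mem_filter] at h1 h2
          omega
    -- pointwise identification
    funext b
    by_cases hb : inDiagram α b
    · have hb' := mem_diagramFinset.mpr hb
      have hstdb : S b = stdize α T' b := by rw [hstd']
      unfold stdize at hstdb
      rw [if_pos hb] at hstdb
      have hmark : (T' b).2 = (S b).2 := by rw [hstdb]
      have hval : (S b).1
          = ((diagramFinset α).filter (fun a => keyLt α T' a b)).card + 1 := by
        rw [hstdb]
      have hv1 : 1 ≤ (T' b).1 := hT'M.pos b hb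
      have hirr' : ¬ keyLt α T' b b := by
        intro h
        unfold keyLt at h
        rcases h with h | ⟨_, h | ⟨_, h⟩⟩ <;> omega
      have hlow : psum β ((T' b).1 - 1) < (S b).1 := by
        have hsub : (diagramFinset α).filter (fun a => (T' a).1 ≤ (T' b).1 - 1)
            ⊆ (diagramFinset α).filter (fun a => keyLt α T' a b) := by
          intro a ha
          rw [Finset.mem_filter] at ha ⊢
          refine ⟨ha.1, ?_⟩
          unfold keyLt
          left
          have hpa := hT'M.pos a (mem_diagramFinset.mp ha.1)
          have h2 := ha.2
          have l1 := mcode_ub (T' a)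
          have l2 := mcode_lb (T' b)
          omega
        have hcc := Finset.card_le_card hsub
        rw [hcum ((T' b).1 - 1)] at hcc
        omega
      have hup : (S b).1 ≤ psum β ((T' b).1) := by
        have hsub : (diagramFinset α).filter (fun a => keyLt α T' a b)
            ⊆ ((diagramFinset α).filter (fun a => (T' a).1 ≤ (T' b).1)).erase b := by
          intro a ha
          rw [Finset.mem_filter] at ha
          rw [Finset.mem_erase, Finset.mem_filter]
          have hane : a ≠ b := by
            rintro rfl
            exact hirr' ha.2
          refine ⟨hane, ha.1, ?_⟩
          have hpa := hT'M.pos a (mem_diagramFinset.mp ha.1)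
          have hmle : mcode (T' a) ≤ mcode (T' b) := by
            have h2 := ha.2
            unfold keyLt at h2
            rcases h2 with h | ⟨h, _⟩
            · exact le_of_lt h
            · exact le_of_eq h
          have l1 := mcode_lb (T' a)
          have l2 := mcode_ub (T' b)
          omega
        have hcc := Finset.card_le_card hsub
        have hbmem : b ∈ (diagramFinset α).filter (fun a => (T' a).1 ≤ (T' b).1) :=
          Finset.mem_filter.mpr ⟨hb', le_refl _⟩
        have hpos2 : 0 < ((diagramFinset α).filter (fun a => (T' a).1 ≤ (T' b).1)).card :=
          Finset.card_pos.mpr ⟨b, hbmem⟩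
        rw [Finset.card_erase_of_mem hbmem] at hcc
        rw [hcum ((T' b).1)] at hcc hpos2
        omega
      have hvb := hbd b hb
      have hfeq : blk β ((S b).1) = (T' b).1 :=
        (hblk_eq ((S b).1) ((T' b).1) hvb.1 hvb.2 hv1).mpr ⟨hlow, hup⟩
      have hTbv : T b = (blk β ((S b).1), (S b).2) := hTval b hb
      rw [hTbv, hfeq, ← hmark]
    · rw [hT'M.offDiag b hb, hToff b hb]


end QSQ
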